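/- Lower bound on the binary quadratic program: let A, B_1, …, B_m be symmetric real n×n matrices, b ∈ ℝ^m, γ > 0, and let {1,…,m} be partitioned into index sets I_eq and I_in. Suppose x ∈ {−1, +1}^n is such that the rank-one matrix X = x xᵀ satisfies ⟨B_i, X⟩ = b_i for all i ∈ I_eq and ⟨B_i, X⟩ ≤ b_i for all i ∈ I_in. Then for every u ∈ ℝ^m with u_i ≥ 0 for all i ∈ I_in and every γ > 0, one has d_γ(u) − n²/(2γ) ≤ xᵀ A x, where d_γ(u) = −uᵀb − (γ/2)‖Π(−A − Σ_{i=1}^m u_i B_i)‖²_F and Π denotes the metric projection onto the PSD cone. (Proposition 4) -/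

import Mathlib

open Matrix

/-- Frobenius (trace) inner product of two real `n × n` matrices. -/
noncomputable def frobInner {n : ℕ} (A B : Matrix (Fin n) (Fin n) ℝ) : ℝ :=
  (Aᵀ * B).trace

/-- Squared Frobenius norm of a real `n × n` matrix. -/
noncomputable def frobNormSq {n : ℕ} (X : Matrix (Fin n) (Fin n) ℝ) : ℝ :=
  (Xᵀ * X).trace

/-- Frobenius norm of a real `n × n` matrix. -/
noncomputable def frobNorm {n : ℕ} (X : Matrix (Fin n) (Fin n) ℝ) : ℝ :=
  Real.sqrt (frobNormSq X)

/-- `proj` is the metric projection onto the PSD cone: for every symmetric `X`,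
`proj X` is PSD and is nearest to `X` in Frobenius norm among all PSD matrices. -/
def IsPSDProjection {n : ℕ}
    (proj : Matrix (Fin n) (Fin n) ℝ → Matrix (Fin n) (Fin n) ℝ) : Prop :=
  ∀ X : Matrix (Fin n) (Fin n) ℝ, X.IsSymm →
    (proj X).PosSemidef ∧
      ∀ Y : Matrix (Fin n) (Fin n) ℝ, Y.PosSemidef →
        frobNorm (proj X - X) ≤ frobNorm (Y - X)

/-- `C(u) = −A − Σᵢ uᵢ Bᵢ`. -/
noncomputable def Cmat {n m : ℕ} (A : Matrix (Fin n) (Fin n) ℝ)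
    (B : Fin m → Matrix (Fin n) (Fin n) ℝ) (u : Fin m → ℝ) :
    Matrix (Fin n) (Fin n) ℝ :=
  -A - ∑ i, u i • B i

/-- `d_γ(u) = −uᵀb − (γ/2)‖Π(C(u))‖²_F`. -/
noncomputable def dualObj {n m : ℕ} (A : Matrix (Fin n) (Fin n) ℝ)
    (B : Fin m → Matrix (Fin n) (Fin n) ℝ) (b : Fin m → ℝ) (γ : ℝ)
    (proj : Matrix (Fin n) (Fin n) ℝ → Matrix (Fin n) (Fin n) ℝ)
    (u : Fin m → ℝ) : ℝ :=
  -(∑ i, u i * b i) - (γ / 2) * frobNormSq (proj (Cmat A B u))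

/- ### Auxiliary lemmas -/

lemma frobInner_eq_sum {n : ℕ} (A B : Matrix (Fin n) (Fin n) ℝ) :
    frobInner A B = ∑ i, ∑ j, A i j * B i j := by
  simp only [frobInner, Matrix.trace, Matrix.mul_apply, Matrix.diag,
    Matrix.transpose_apply]
  rw [Finset.sum_comm]

lemma frobInner_comm {n : ℕ} (A B : Matrix (Fin n) (Fin n) ℝ) :
    frobInner A B = frobInner B A := by
  simp only [frobInner_eq_sum, mul_comm]

lemma frobInner_add_right {n : ℕ} (X Y Z : Matrix (Fin n) (Fin n) ℝ) :
    frobInner X (Y + Z) = frobInner X Y + frobInner X Z := by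
  simp [frobInner_eq_sum, Matrix.add_apply, mul_add, Finset.sum_add_distrib]

lemma frobInner_zero_right {n : ℕ} (X : Matrix (Fin n) (Fin n) ℝ) :
    frobInner X 0 = 0 := by
  simp [frobInner_eq_sum]

lemma frobInner_neg_right {n : ℕ} (X Y : Matrix (Fin n) (Fin n) ℝ) :
    frobInner X (-Y) = -frobInner X Y := by
  simp [frobInner_eq_sum, Finset.sum_neg_distrib]

lemma frobInner_sub_right {n : ℕ} (X Y Z : Matrix (Fin n) (Fin n) ℝ) :
    frobInner X (Y - Z) = frobInner X Y - frobInner X Z := by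
  simp [frobInner_eq_sum, Matrix.sub_apply, mul_sub, Finset.sum_sub_distrib]

lemma frobInner_smul_right {n : ℕ} (X Y : Matrix (Fin n) (Fin n) ℝ) (c : ℝ) :
    frobInner X (c • Y) = c * frobInner X Y := by
  simp only [frobInner_eq_sum, Matrix.smul_apply, smul_eq_mul, Finset.mul_sum]
  exact Finset.sum_congr rfl fun i _ => Finset.sum_congr rfl fun j _ => by ring

lemma frobInner_sum_right {n : ℕ} {ι : Type*} (s : Finset ι)
    (X : Matrix (Fin n) (Fin n) ℝ) (M : ι → Matrix (Fin n) (Fin n) ℝ) :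
    frobInner X (∑ i ∈ s, M i) = ∑ i ∈ s, frobInner X (M i) := by
  classical
  induction s using Finset.induction with
  | empty => simp [frobInner_zero_right]
  | insert _ _ h ih => simp [Finset.sum_insert h, frobInner_add_right, ih]

lemma frobNormSq_eq_sum {n : ℕ} (X : Matrix (Fin n) (Fin n) ℝ) :
    frobNormSq X = ∑ i, ∑ j, X i j * X i j :=
  frobInner_eq_sum X X

lemma frobNormSq_nonneg {n : ℕ} (X : Matrix (Fin n) (Fin n) ℝ) :
    0 ≤ frobNormSq X := by
  rw [frobNormSq_eq_sum]
  exact Finset.sum_nonneg fun i _ => Finset.sum_nonneg fun j _ => mul_self_nonneg _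

lemma frobNorm_sq {n : ℕ} (X : Matrix (Fin n) (Fin n) ℝ) :
    frobNorm X ^ 2 = frobNormSq X :=
  Real.sq_sqrt (frobNormSq_nonneg X)

lemma frobNorm_nonneg {n : ℕ} (X : Matrix (Fin n) (Fin n) ℝ) :
    0 ≤ frobNorm X := Real.sqrt_nonneg _

/-- Cauchy–Schwarz for the Frobenius inner product. -/
lemma frobInner_le_norm_mul_norm {n : ℕ} (A B : Matrix (Fin n) (Fin n) ℝ) :
    frobInner A B ≤ frobNorm A * frobNorm B := by
  have h2 : (frobInner A B) ^ 2 ≤ frobNormSq A * frobNormSq B := by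
    rw [frobInner_eq_sum, frobNormSq_eq_sum, frobNormSq_eq_sum]
    have := Finset.sum_mul_sq_le_sq_mul_sq (Finset.univ : Finset (Fin n × Fin n))
      (fun p => A p.1 p.2) (fun p => B p.1 p.2)
    simpa [Fintype.sum_prod_type, pow_two] using this
  have hle : frobInner A B ≤ |frobInner A B| := le_abs_self _
  refine hle.trans ?_
  have habs : |frobInner A B| = Real.sqrt ((frobInner A B) ^ 2) := by
    rw [Real.sqrt_sq_eq_abs]
  rw [habs, frobNorm, frobNorm, ← Real.sqrt_mul (frobNormSq_nonneg A)]
  exact Real.sqrt_le_sqrt h2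

/-- Expansion of the squared norm of `M + t • X`. -/
lemma frobNormSq_add_smul {n : ℕ} (M X : Matrix (Fin n) (Fin n) ℝ) (t : ℝ) :
    frobNormSq (M + t • X)
      = frobNormSq M + 2 * t * frobInner X M + t ^ 2 * frobNormSq X := by
  simp only [frobNormSq_eq_sum, frobInner_eq_sum, Matrix.add_apply, Matrix.smul_apply,
    smul_eq_mul, Finset.mul_sum, ← Finset.sum_add_distrib]
  refine Finset.sum_congr rfl fun i _ => Finset.sum_congr rfl fun j _ => by ring

lemma posSemidef_add {n : ℕ} {P Q : Matrix (Fin n) (Fin n) ℝ}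
    (hP : P.PosSemidef) (hQ : Q.PosSemidef) : (P + Q).PosSemidef := by
  refine Matrix.posSemidef_iff_dotProduct_mulVec.mpr ⟨hP.1.add hQ.1, fun v => ?_⟩
  have := add_nonneg (hP.dotProduct_mulVec_nonneg v) (hQ.dotProduct_mulVec_nonneg v)
  simpa [Matrix.add_mulVec, dotProduct_add] using this

lemma posSemidef_smul {n : ℕ} {P : Matrix (Fin n) (Fin n) ℝ} {t : ℝ}
    (hP : P.PosSemidef) (ht : 0 ≤ t) : (t • P).PosSemidef := by
  refine Matrix.posSemidef_iff_dotProduct_mulVec.mpr ⟨?_, fun v => ?_⟩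
  · unfold Matrix.IsHermitian
    rw [Matrix.conjTranspose_smul, hP.1.eq, star_trivial]
  · have := mul_nonneg ht (hP.dotProduct_mulVec_nonneg v)
    simpa [Matrix.smul_mulVec, dotProduct_smul] using this

/-- Variational inequality for the metric projection onto the PSD cone:
for every PSD matrix `X`, `⟨C, X⟩ ≤ ⟨Π(C), X⟩`. -/
lemma proj_inner_ge {n : ℕ} (C P : Matrix (Fin n) (Fin n) ℝ)
    (hP : P.PosSemidef)
    (hnear : ∀ Y : Matrix (Fin n) (Fin n) ℝ, Y.PosSemidef →
      frobNorm (P - C) ≤ frobNorm (Y - C))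
    (X : Matrix (Fin n) (Fin n) ℝ) (hX : X.PosSemidef) :
    frobInner X C ≤ frobInner X P := by
  set ε : ℝ := frobInner X (P - C) with hε
  have hsplit : frobInner X P - frobInner X C = ε := by
    rw [hε, frobInner_sub_right]
  rw [← sub_nonneg, hsplit]
  by_contra hneg
  push_neg at hneg
  set S : ℝ := frobNormSq X with hS
  have hS0 : 0 ≤ S := frobNormSq_nonneg X
  set t : ℝ := -ε / (S + 1) with htdef
  have ht : 0 < t := div_pos (by linarith) (by linarith)
  have hY : (P + t • X).PosSemidef := posSemidef_add hP (posSemidef_smul hX ht.le)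
  have hkey := hnear _ hY
  have hsq : frobNormSq (P - C) ≤ frobNormSq (P + t • X - C) := by
    have h1 := frobNorm_nonneg (P - C)
    have := pow_le_pow_left₀ h1 hkey 2
    rw [frobNorm_sq, frobNorm_sq] at this
    exact this
  have hrw : P + t • X - C = (P - C) + t • X := add_sub_right_comm P (t • X) C
  rw [hrw, frobNormSq_add_smul] at hsq
  have h0 : 0 ≤ 2 * t * ε + t ^ 2 * S := by linarith
  have htS : t * (S + 1) = -ε := by
    rw [htdef, div_mul_cancel₀]
    linarith
  nlinarith [sq_nonneg ε, mul_pos ht ht]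

lemma vecMulVec_posSemidef {n : ℕ} (x : Fin n → ℝ) :
    (Matrix.vecMulVec x x).PosSemidef := by
  refine Matrix.posSemidef_iff_dotProduct_mulVec.mpr ⟨?_, fun v => ?_⟩
  · unfold Matrix.IsHermitian
    ext i j
    simp [Matrix.conjTranspose_apply, Matrix.vecMulVec_apply, mul_comm]
  · have hcalc : dotProduct (star v) ((Matrix.vecMulVec x x) *ᵥ v)
        = (∑ i, v i * x i) * (∑ j, x j * v j) := by
      simp only [dotProduct, Matrix.mulVec, dotProduct, Matrix.vecMulVec_apply,
        star_trivial, Finset.sum_mul, Finset.mul_sum]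
      refine Finset.sum_congr rfl fun i _ => Finset.sum_congr rfl fun j _ => by ring
    rw [hcalc]
    have : (∑ j, x j * v j) = (∑ i, v i * x i) := by
      exact Finset.sum_congr rfl fun i _ => mul_comm _ _
    rw [this]
    exact mul_self_nonneg _

/-- Proposition 4: for any dual-feasible `u` and any `γ > 0`, `d_γ(u) − n²/(2γ)` is a
lower bound on the BQP objective `xᵀAx` at any feasible binary solution `x`. -/
theorem stmt_10 (n m : ℕ) (A : Matrix (Fin n) (Fin n) ℝ) (hA : A.IsSymm)
    (B : Fin m → Matrix (Fin n) (Fin n) ℝ) (hB : ∀ i, (B i).IsSymm)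
    (b : Fin m → ℝ)
    (Ieq Iin : Set (Fin m)) (hunion : Ieq ∪ Iin = Set.univ) (hdisj : Disjoint Ieq Iin)
    (proj : Matrix (Fin n) (Fin n) ℝ → Matrix (Fin n) (Fin n) ℝ)
    (hproj : IsPSDProjection proj)
    (x : Fin n → ℝ) (hx : ∀ i, x i = 1 ∨ x i = -1)
    (heq : ∀ i ∈ Ieq, frobInner (B i) (Matrix.vecMulVec x x) = b i)
    (hin : ∀ i ∈ Iin, frobInner (B i) (Matrix.vecMulVec x x) ≤ b i)
    (u : Fin m → ℝ) (hu : ∀ i ∈ Iin, 0 ≤ u i)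
    (γ : ℝ) (hγ : 0 < γ) :
    dualObj A B b γ proj u - (n : ℝ) ^ 2 / (2 * γ) ≤ x ⬝ᵥ A.mulVec x := by
  set X : Matrix (Fin n) (Fin n) ℝ := Matrix.vecMulVec x x with hXdef
  have hXpsd : X.PosSemidef := vecMulVec_posSemidef x
  have hxsq : ∀ i, x i * x i = 1 := by
    intro i; rcases hx i with h | h <;> rw [h] <;> norm_num
  -- ‖X‖² = n²
  have hXnormSq : frobNormSq X = (n : ℝ) ^ 2 := by
    rw [frobNormSq_eq_sum]
    have hone : ∀ i j : Fin n, X i j * X i j = 1 := by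
      intro i j
      simp only [hXdef, Matrix.vecMulVec_apply]
      nlinarith [hxsq i, hxsq j]
    simp only [hone, Finset.sum_const, Finset.card_univ, Fintype.card_fin,
      nsmul_eq_mul, mul_one]
    push_cast
    ring
  -- symmetry of C(u)
  have hCsymm : (Cmat A B u).IsSymm := by
    unfold Matrix.IsSymm Cmat
    rw [Matrix.transpose_sub, Matrix.transpose_neg, hA]
    congr 1
    rw [Matrix.transpose_sum]
    exact Finset.sum_congr rfl fun i _ => by
      rw [Matrix.transpose_smul, hB i]
  obtain ⟨hPpsd, hPnear⟩ := hproj (Cmat A B u) hCsymm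
  set C : Matrix (Fin n) (Fin n) ℝ := Cmat A B u with hCdef
  set P : Matrix (Fin n) (Fin n) ℝ := proj C with hPdef
  -- variational inequality
  have hvar : frobInner X C ≤ frobInner X P :=
    proj_inner_ge C P hPpsd hPnear X hXpsd
  -- Cauchy–Schwarz
  have hCS : frobInner X P ≤ frobNorm X * frobNorm P :=
    frobInner_le_norm_mul_norm X P
  have hXnorm : frobNorm X = (n : ℝ) := by
    rw [frobNorm, hXnormSq, Real.sqrt_sq (Nat.cast_nonneg n)]
  -- AM–GM
  have hamgm : frobNorm X * frobNorm P
      ≤ (γ / 2) * frobNormSq P + (n : ℝ) ^ 2 / (2 * γ) := by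
    rw [hXnorm, ← frobNorm_sq P]
    have h2γ : (0:ℝ) < 2 * γ := by linarith
    rw [div_mul_eq_mul_div, div_add_div _ _ two_ne_zero (ne_of_gt h2γ),
      le_div_iff₀ (by positivity)]
    nlinarith [sq_nonneg (γ * frobNorm P - (n : ℝ))]
  -- decomposition of the objective
  have hdecomp : frobInner X A
      = -frobInner X C - ∑ i, u i * frobInner (B i) X := by
    have hC1 : frobInner X C
        = -frobInner X A - ∑ i, u i * frobInner (B i) X := by
      rw [hCdef]
      show frobInner X (-A - ∑ i, u i • B i) = _
      rw [frobInner_sub_right, frobInner_neg_right, frobInner_sum_right]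
      congr 1
      exact Finset.sum_congr rfl fun i _ => by
        rw [frobInner_smul_right, frobInner_comm]
    linarith [hC1]
  -- x ⬝ᵥ A x = ⟨X, A⟩
  have hAx : x ⬝ᵥ A.mulVec x = frobInner X A := by
    rw [frobInner_eq_sum]
    simp only [dotProduct, Matrix.mulVec, dotProduct, hXdef, Matrix.vecMulVec_apply,
      Finset.mul_sum]
    exact Finset.sum_congr rfl fun i _ => Finset.sum_congr rfl fun j _ => by ring
  -- feasibility bound on the linear term
  have hsum : ∑ i, u i * frobInner (B i) X ≤ ∑ i, u i * b i := by
    refine Finset.sum_le_sum fun i _ => ?_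
    by_cases hi : i ∈ Ieq
    · rw [heq i hi]
    · have hmem : i ∈ Ieq ∪ Iin := hunion ▸ Set.mem_univ i
      have hiin : i ∈ Iin := hmem.resolve_left hi
      exact mul_le_mul_of_nonneg_left (hin i hiin) (hu i hiin)
  -- put everything together
  rw [hAx, hdecomp]
  unfold dualObj
  rw [← hCdef, ← hPdef]
  linarith [hvar, hCS.trans hamgm, hsum]
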